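/- If Y^s follows the Gamma law \Gamma(n,\mu) (integer shape n, rate \mu) and the i.i.d. inspection gaps C_i have Laplace transform L, then E[K^r] = \sum_{i=0}^{n-1} (\mu^i/i!) (-1)^i (1/(1-L))^{(i)}(\mu), where (1/(1-L))^{(i)} denotes the i-th derivative. -/

import Mathlib

open MeasureTheory ProbabilityTheory Filter Set
open scoped ENNReal Topology

noncomputable def Rfun (r : ℝ) (n : ℕ) (t : ℝ) : ℝ :=
  ∑ i ∈ Finset.range n, (r * t) ^ i * Real.exp (-(r * t)) / (Nat.factorial i)

lemma Rfun_hasDerivAt (r : ℝ) (n : ℕ) (t : ℝ) :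
    HasDerivAt (Rfun r (n + 1))
      (-(r * ((r * t) ^ n * Real.exp (-(r * t)) / (Nat.factorial n)))) t := by
  induction n with
  | zero =>
      have h : HasDerivAt (fun t : ℝ => (r*t)^0 * Real.exp (-(r*t)) / (Nat.factorial 0))
          (-(r * ((r * t) ^ 0 * Real.exp (-(r * t)) / (Nat.factorial 0)))) t := by
        simp only [pow_zero, one_mul, Nat.factorial_zero, Nat.cast_one, div_one]
        have : HasDerivAt (fun t : ℝ => Real.exp (-(r*t))) (Real.exp (-(r*t)) * (-r)) t := by
          have h1 : HasDerivAt (fun t : ℝ => -(r*t)) (-r) t := by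
            simpa [Pi.neg_def] using ((hasDerivAt_id t).const_mul r).neg
          exact h1.exp
        simpa [mul_comm, mul_left_comm] using this
      have : Rfun r 1 = fun t : ℝ => (r*t)^0 * Real.exp (-(r*t)) / (Nat.factorial 0) := by
        funext t; simp [Rfun]
      rw [this]; exact h
  | succ m ih =>
      have hterm : HasDerivAt (fun t : ℝ => (r*t)^(m+1) * Real.exp (-(r*t)) / (Nat.factorial (m+1)))
          ((r * ((r*t)^m * Real.exp (-(r*t)) / (Nat.factorial m)))
            - (r * ((r*t)^(m+1) * Real.exp (-(r*t)) / (Nat.factorial (m+1))))) t := by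
        have h1 : HasDerivAt (fun t : ℝ => (r*t)^(m+1)) ((m+1 : ℕ) * (r*t)^m * r) t := by
          have := ((hasDerivAt_id t).const_mul r).pow (m+1)
          simpa [Pi.pow_def] using this
        have h2 : HasDerivAt (fun t : ℝ => Real.exp (-(r*t))) (Real.exp (-(r*t)) * (-r)) t := by
          have h1 : HasDerivAt (fun t : ℝ => -(r*t)) (-r) t := by
            simpa [Pi.neg_def] using ((hasDerivAt_id t).const_mul r).neg
          exact h1.exp
        have := (h1.mul h2).div_const ((Nat.factorial (m+1) : ℝ))
        refine this.congr_deriv ?_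
        have hfac : ((Nat.factorial (m+1) : ℝ)) = (m+1 : ℝ) * (Nat.factorial m : ℝ) := by
          push_cast [Nat.factorial_succ]; ring
        have hfacm : (Nat.factorial m : ℝ) ≠ 0 := by positivity
        rw [hfac]
        field_simp
        push_cast
        ring
      have := ih.add hterm
      have heq : Rfun r (m + 1 + 1) = fun t =>
          Rfun r (m+1) t + (r*t)^(m+1) * Real.exp (-(r*t)) / (Nat.factorial (m+1)) := by
        funext t; simp [Rfun, Finset.sum_range_succ]
      rw [heq]
      refine this.congr_deriv ?_
      ring

lemma Rfun_tendsto_zero {r : ℝ} (hr : 0 < r) (n : ℕ) :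
    Tendsto (Rfun r n) atTop (𝓝 0) := by
  have : ∀ i : ℕ, Tendsto (fun t : ℝ => (r * t) ^ i * Real.exp (-(r * t)) / (Nat.factorial i))
      atTop (𝓝 0) := by
    intro i
    have h1 : Tendsto (fun t : ℝ => r * t) atTop atTop :=
      tendsto_id.const_mul_atTop hr
    have h2 : Tendsto (fun x : ℝ => x ^ i * Real.exp (-x)) atTop (𝓝 0) :=
      Real.tendsto_pow_mul_exp_neg_atTop_nhds_zero i
    have := (h2.comp h1).div_const ((Nat.factorial i : ℝ))
    simpa using this
  have := tendsto_finset_sum (Finset.range n) (fun i _ => this i)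
  rw [Finset.sum_const_zero] at this
  exact this

lemma Rfun_deriv' {r : ℝ} (hr : 0 < r) {n : ℕ} (hn : 1 ≤ n) (x : ℝ) :
    HasDerivAt (fun y => -Rfun r n y)
      (r ^ n / (Nat.factorial (n-1)) * x ^ (n-1) * Real.exp (-(r * x))) x := by
  obtain ⟨m, rfl⟩ : ∃ m, n = m + 1 := ⟨n - 1, (Nat.succ_pred_eq_of_pos hn).symm⟩
  have := (Rfun_hasDerivAt r m x).neg
  refine this.congr_deriv ?_
  simp only [Nat.add_sub_cancel]
  rw [mul_pow, pow_succ]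
  field_simp

lemma Rfun_nonneg {r : ℝ} (n : ℕ) {t : ℝ} (hrt : 0 ≤ r * t) : 0 ≤ Rfun r n t := by
  refine Finset.sum_nonneg fun i _ => ?_
  positivity

lemma integral_tail_Rfun {r : ℝ} (hr : 0 < r) {n : ℕ} (hn : 1 ≤ n) {t : ℝ} (ht : 0 ≤ t) :
    ∫ x in Ioi t, r ^ n / (Nat.factorial (n-1)) * x ^ (n-1) * Real.exp (-(r * x))
      = Rfun r n t := by
  have hderiv : ∀ x ∈ Ici t, HasDerivAt (fun y => -Rfun r n y)
      (r ^ n / (Nat.factorial (n-1)) * x ^ (n-1) * Real.exp (-(r * x))) x :=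
    fun x _ => Rfun_deriv' hr hn x
  have hnonneg : ∀ x ∈ Ioi t, 0 ≤ r ^ n / (Nat.factorial (n-1)) * x ^ (n-1) * Real.exp (-(r*x)) := by
    intro x hx
    have hx0 : 0 ≤ x := le_trans ht (le_of_lt hx)
    positivity
  have htend : Tendsto (fun y => -Rfun r n y) atTop (𝓝 0) := by
    simpa using (Rfun_tendsto_zero hr n).neg
  have hint : IntegrableOn
      (fun x => r ^ n / (Nat.factorial (n-1)) * x ^ (n-1) * Real.exp (-(r * x))) (Ioi t) :=
    integrableOn_Ioi_deriv_of_nonneg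
      ((hderiv t self_mem_Ici).continuousAt.continuousWithinAt)
      (fun x hx => hderiv x (le_of_lt hx : t ≤ x)) hnonneg htend
  have := integral_Ioi_of_hasDerivAt_of_tendsto' hderiv hint htend
  rw [this]; ring

lemma gamma_tail {n : ℕ} (hn : 1 ≤ n) {r : ℝ} (hr : 0 < r) {t : ℝ} (ht : 0 ≤ t) :
    gammaMeasure n r (Ioi t) = ENNReal.ofReal (Rfun r n t) := by
  rw [gammaMeasure, withDensity_apply _ measurableSet_Ioi]
  have hpdf : ∀ x ∈ Ioi t, gammaPDF n r x
      = ENNReal.ofReal (r ^ n / (Nat.factorial (n-1)) * x ^ (n-1) * Real.exp (-(r * x))) := by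
    intro x hx
    have hx0 : 0 < x := lt_of_le_of_lt ht hx
    rw [gammaPDF_of_nonneg hx0.le]
    congr 1
    have h1 : r ^ (n : ℝ) = r ^ n := Real.rpow_natCast r n
    have h2 : x ^ ((n : ℝ) - 1) = x ^ (n - 1 : ℕ) := by
      rw [show ((n:ℝ) - 1) = ((n - 1 : ℕ) : ℝ) by
        push_cast [Nat.cast_sub hn]; ring]
      exact Real.rpow_natCast x (n-1)
    have h3 : Real.Gamma n = (Nat.factorial (n-1) : ℝ) := by
      rw [show (n : ℝ) = ((n - 1 : ℕ) : ℝ) + 1 by push_cast [Nat.cast_sub hn]; ring]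
      exact Real.Gamma_nat_eq_factorial (n-1)
    rw [h1, h2, h3]
  rw [setLIntegral_congr_fun measurableSet_Ioi hpdf]
  rw [← ofReal_integral_eq_lintegral_ofReal]
  · rw [integral_tail_Rfun hr hn ht]
  · exact integrableOn_Ioi_deriv_of_nonneg
      (((Rfun_deriv' hr hn t)).continuousAt.continuousWithinAt)
      (fun x hx => Rfun_deriv' hr hn x)
      (fun x hx => by
        have hx0 : 0 ≤ x := le_trans ht (le_of_lt hx)
        positivity)
      (by simpa using (Rfun_tendsto_zero hr n).neg)
  · filter_upwards [ae_restrict_mem measurableSet_Ioi] with x hx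
    have hx0 : 0 ≤ x := le_trans ht (le_of_lt hx)
    positivity

lemma prob_lt_eq {Ω : Type*} [MeasurableSpace Ω] (μ : Measure Ω) [IsProbabilityMeasure μ]
    {X Y : Ω → ℝ} (hX : Measurable X) (hY : Measurable Y) (h : IndepFun X Y μ) :
    μ {ω | X ω < Y ω} = ∫⁻ x, (μ.map Y) (Ioi x) ∂(μ.map X) := by
  have hmap : μ.map (fun ω => (X ω, Y ω)) = (μ.map X).prod (μ.map Y) :=
    (indepFun_iff_map_prod_eq_prod_map_map hX.aemeasurable hY.aemeasurable).mp h
  have hs : MeasurableSet {p : ℝ × ℝ | p.1 < p.2} := measurableSet_lt measurable_fst measurable_snd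
  have h1 : μ {ω | X ω < Y ω} = μ.map (fun ω => (X ω, Y ω)) {p : ℝ × ℝ | p.1 < p.2} := by
    rw [Measure.map_apply (hX.prodMk hY) hs]; rfl
  rw [h1, hmap, Measure.prod_apply hs]
  rfl

section Laplace
variable {Ω : Type*} [MeasurableSpace Ω] {μ : Measure Ω} [IsProbabilityMeasure μ]

lemma exp_neg_integrable {X : Ω → ℝ} (hX : Measurable X) (hXpos : ∀ᵐ ω ∂μ, 0 < X ω) (s : ℝ)
    (hs : 0 ≤ s) : Integrable (fun ω => Real.exp (-s * X ω)) μ := by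
  refine (integrable_const (1:ℝ)).mono' ((hX.const_mul (-s)).exp).aestronglyMeasurable ?_
  filter_upwards [hXpos] with ω hω
  rw [Real.norm_eq_abs, abs_of_pos (Real.exp_pos _)]
  exact Real.exp_le_one_iff.mpr (by nlinarith)

lemma laplace_nonneg {X : Ω → ℝ} (s : ℝ) : 0 ≤ ∫ ω, Real.exp (-s * X ω) ∂μ :=
  integral_nonneg fun ω => (Real.exp_pos _).le

lemma laplace_lt_one {X : Ω → ℝ} (hX : Measurable X) (hXpos : ∀ᵐ ω ∂μ, 0 < X ω) {s : ℝ}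
    (hs : 0 < s) : ∫ ω, Real.exp (-s * X ω) ∂μ < 1 := by
  set f : Ω → ℝ := fun ω => 1 - Real.exp (-s * X ω) with hf
  have hfint : Integrable f μ := (integrable_const 1).sub (exp_neg_integrable hX hXpos s hs.le)
  have hfnonneg : 0 ≤ᵐ[μ] f := by
    filter_upwards [hXpos] with ω hω
    simp only [hf, Pi.zero_apply, sub_nonneg, Real.exp_le_one_iff]
    nlinarith
  have hfpos : ∀ᵐ ω ∂μ, 0 < f ω := by
    filter_upwards [hXpos] with ω hω
    simp only [hf, sub_pos, Real.exp_lt_one_iff]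
    nlinarith
  have hsupp : 0 < μ (Function.support f) := by
    have h1 : (univ : Set Ω) ⊆ Function.support f ∪ {ω | ¬ 0 < f ω} := by
      intro ω _
      by_cases h : 0 < f ω
      · exact Or.inl (ne_of_gt h)
      · exact Or.inr h
    have h2 : μ {ω | ¬ 0 < f ω} = 0 := hfpos
    have := measure_union_le (μ := μ) (Function.support f) {ω | ¬ 0 < f ω}
    have huniv : (1:ℝ≥0∞) ≤ μ (Function.support f) + μ {ω | ¬ 0 < f ω} := by
      calc (1:ℝ≥0∞) = μ univ := (measure_univ).symm
      _ ≤ μ (Function.support f ∪ {ω | ¬ 0 < f ω}) := measure_mono h1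
      _ ≤ _ := measure_union_le _ _
    rw [h2, add_zero] at huniv
    exact lt_of_lt_of_le one_pos huniv
  have hpos : 0 < ∫ ω, f ω ∂μ :=
    (integral_pos_iff_support_of_nonneg_ae hfnonneg hfint).mpr hsupp
  have : ∫ ω, f ω ∂μ = 1 - ∫ ω, Real.exp (-s * X ω) ∂μ := by
    rw [hf]
    rw [integral_sub (integrable_const 1) (exp_neg_integrable hX hXpos s hs.le)]
    simp
  linarith [this ▸ hpos]

lemma laplace_sum_pow {C : ℕ → Ω → ℝ} (hCmeas : ∀ i, Measurable (C i))
    (hCiid : ∀ i j, IdentDistrib (C i) (C j) μ μ)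
    (hCindep : iIndepFun C μ) (s : ℝ) (k : ℕ) :
    ∫ ω, Real.exp (-s * (∑ i ∈ Finset.range k, C i ω)) ∂μ
      = (∫ ω, Real.exp (-s * C 0 ω) ∂μ) ^ k := by
  have h1 : ∫ ω, Real.exp (-s * (∑ i ∈ Finset.range k, C i ω)) ∂μ
      = mgf (∑ i ∈ Finset.range k, C i) μ (-s) := by
    unfold mgf
    congr 1; funext ω; simp
  have h2 : ∀ i, mgf (C i) μ (-s) = ∫ ω, Real.exp (-s * C 0 ω) ∂μ := by
    intro i
    have hident : IdentDistrib (fun ω => Real.exp (-s * C i ω)) (fun ω => Real.exp (-s * C 0 ω)) μ μ :=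
      (hCiid i 0).comp (Real.measurable_exp.comp (measurable_const_mul (-s)))
    unfold mgf
    simpa [neg_mul] using hident.integral_eq
  rw [h1, iIndepFun.mgf_sum hCindep hCmeas (Finset.range k)]
  rw [Finset.prod_congr rfl (fun i _ => h2 i)]
  simp

end Laplace

lemma pow_mul_exp_le_aux {m : ℕ} {c t : ℝ} (ht : 0 ≤ t) (hc : 0 < c) :
    t ^ m * Real.exp (-(2*c)*t) ≤ (Nat.factorial m) * (c⁻¹)^m * Real.exp (-(c*t)) := by
  have h1 : (c*t)^m / (Nat.factorial m) ≤ Real.exp (c*t) := by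
    refine le_trans ?_ (Real.sum_le_exp_of_nonneg (by positivity) (m+1))
    exact Finset.single_le_sum (f := fun i => (c*t)^i / (Nat.factorial i))
      (fun i _ => by positivity) (Finset.self_mem_range_succ m)
  have h2 : t^m ≤ (Nat.factorial m) * (c⁻¹)^m * Real.exp (c*t) := by
    have hfm : (0:ℝ) < (Nat.factorial m : ℝ) := by positivity
    rw [mul_pow] at h1
    have := (div_le_iff₀ hfm).mp h1
    calc t^m = (c⁻¹)^m * (c^m * t^m) := by
          rw [← mul_assoc, ← mul_pow, inv_mul_cancel₀ hc.ne', one_pow, one_mul]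
      _ ≤ (c⁻¹)^m * (Real.exp (c*t) * (Nat.factorial m)) := by
          apply mul_le_mul_of_nonneg_left this (by positivity)
      _ = (Nat.factorial m) * (c⁻¹)^m * Real.exp (c*t) := by ring
  calc t^m * Real.exp (-(2*c)*t)
      ≤ ((Nat.factorial m) * (c⁻¹)^m * Real.exp (c*t)) * Real.exp (-(2*c)*t) := by
        apply mul_le_mul_of_nonneg_right h2 (Real.exp_pos _).le
    _ = (Nat.factorial m) * (c⁻¹)^m * Real.exp (-(c*t)) := by
        rw [mul_assoc, ← Real.exp_add]; ring_nf


lemma meas_exp_neg (u : ℝ) : Measurable (fun t : ℝ => Real.exp (-(u*t))) := by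
  have h : (fun t : ℝ => Real.exp (-(u*t))) = fun t : ℝ => Real.exp (-u * t) := by
    funext t; rw [neg_mul]
  rw [h]; exact (measurable_const_mul (-u)).exp

section Renewal
variable {ν : Measure ℝ}

lemma integrable_exp_renewal (hnn : ∀ᵐ t ∂ν, 0 ≤ t)
    (hfin : ∀ s : ℝ, 0 < s → (∫⁻ t, ENNReal.ofReal (Real.exp (-(s*t))) ∂ν) ≠ ⊤)
    {s : ℝ} (hs : 0 < s) : Integrable (fun t => Real.exp (-(s*t))) ν := by
  refine ⟨(meas_exp_neg s).aestronglyMeasurable, ?_⟩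
  rw [hasFiniteIntegral_iff_ofReal (ae_of_all _ fun t => (Real.exp_pos _).le)]
  exact lt_top_iff_ne_top.mpr (hfin s hs)

lemma integrable_pow_exp_renewal (hnn : ∀ᵐ t ∂ν, 0 ≤ t)
    (hfin : ∀ s : ℝ, 0 < s → (∫⁻ t, ENNReal.ofReal (Real.exp (-(s*t))) ∂ν) ≠ ⊤)
    {s : ℝ} (hs : 0 < s) (m : ℕ) : Integrable (fun t => t^m * Real.exp (-(s*t))) ν := by
  have hc : 0 < s/2 := by linarith
  refine Integrable.mono' (((integrable_exp_renewal hnn hfin hc).const_mul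
    ((Nat.factorial m) * ((s/2)⁻¹)^m))) ?_ ?_
  · exact ((measurable_id.pow_const m).mul (meas_exp_neg s)).aestronglyMeasurable
  · filter_upwards [hnn] with t ht
    rw [Real.norm_eq_abs, abs_of_nonneg (by positivity)]
    have := pow_mul_exp_le_aux (m := m) ht hc
    calc t^m * Real.exp (-(s*t)) = t^m * Real.exp (-(2*(s/2))*t) := by ring_nf
      _ ≤ (Nat.factorial m) * ((s/2)⁻¹)^m * Real.exp (-(s/2*t)) := this
      _ = (Nat.factorial m) * ((s/2)⁻¹)^m * Real.exp (-(s/2*t)) := rfl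

lemma iteratedDeriv_laplace_renewal (hnn : ∀ᵐ t ∂ν, 0 ≤ t)
    (hfin : ∀ s : ℝ, 0 < s → (∫⁻ t, ENNReal.ofReal (Real.exp (-(s*t))) ∂ν) ≠ ⊤)
    (g : ℝ → ℝ) (hg : ∀ s : ℝ, 0 < s → g s = ∫ t, Real.exp (-(s*t)) ∂ν) (i : ℕ) :
    ∀ s : ℝ, 0 < s → iteratedDeriv i g s = ∫ t, (-t)^i * Real.exp (-(s*t)) ∂ν := by
  induction i with
  | zero =>
      intro s hs
      rw [iteratedDeriv_zero, hg s hs]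
      simp
  | succ m ih =>
      intro s hs
      have hintm : ∀ u : ℝ, 0 < u → Integrable (fun t => (-t)^m * Real.exp (-(u*t))) ν := by
        intro u hu
        refine ((integrable_pow_exp_renewal hnn hfin hu m).const_mul ((-1:ℝ)^m)).congr
          (ae_of_all _ fun t => ?_)
        rw [neg_pow]; ring
      have key : HasDerivAt (fun u => ∫ t, (-t)^m * Real.exp (-(u*t)) ∂ν)
          (∫ t, (-t)^(m+1) * Real.exp (-(s*t)) ∂ν) s := by
        have hε : 0 < s/2 := by linarith
        have hmeasF : ∀ u : ℝ, AEStronglyMeasurable (fun t => (-t)^m * Real.exp (-(u*t))) ν := by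
          intro u
          exact ((measurable_id.neg.pow_const m).mul (meas_exp_neg u)).aestronglyMeasurable
        have := hasDerivAt_integral_of_dominated_loc_of_deriv_le (μ := ν)
          (F := fun u t => (-t)^m * Real.exp (-(u*t)))
          (F' := fun u t => (-t)^(m+1) * Real.exp (-(u*t)))
          (x₀ := s)
          (bound := fun t => (Nat.factorial (m+1)) * ((s/4)⁻¹)^(m+1) * Real.exp (-(s/4*t)))
          (Metric.ball_mem_nhds s hε)
          (Eventually.of_forall fun u => hmeasF u)
          (hintm s hs)
          (((measurable_id.neg.pow_const (m+1)).mul (meas_exp_neg s)).aestronglyMeasurable)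
          ?_ ?_ ?_
        · exact this.2
        · -- bound
          filter_upwards [hnn] with t ht
          intro u hu
          have hu2 : s/2 < u := by
            have := abs_lt.mp (by simpa [Real.dist_eq] using hu)
            linarith [this.1]
          rw [Real.norm_eq_abs, abs_mul, abs_pow, abs_neg, abs_of_nonneg ht,
            abs_of_pos (Real.exp_pos _)]
          have h1 : Real.exp (-(u*t)) ≤ Real.exp (-(s/2*t)) := by
            apply Real.exp_le_exp.mpr
            nlinarith
          calc t^(m+1) * Real.exp (-(u*t)) ≤ t^(m+1) * Real.exp (-(s/2*t)) := by
                apply mul_le_mul_of_nonneg_left h1 (by positivity)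
            _ = t^(m+1) * Real.exp (-(2*(s/4))*t) := by ring_nf
            _ ≤ (Nat.factorial (m+1)) * ((s/4)⁻¹)^(m+1) * Real.exp (-(s/4*t)) :=
                pow_mul_exp_le_aux ht (by linarith)
        · -- bound integrable
          exact (integrable_exp_renewal hnn hfin (by linarith : (0:ℝ) < s/4)).const_mul _
        · -- differentiability
          filter_upwards [hnn] with t _
          intro u _
          have h1 : HasDerivAt (fun u : ℝ => Real.exp (-(u*t))) (Real.exp (-(u*t)) * (-t)) u := by
            have h0 : HasDerivAt (fun u : ℝ => -(u*t)) (-t) u := by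
              simpa [Pi.neg_def] using ((hasDerivAt_id u).mul_const t).neg
            exact h0.exp
          have := h1.const_mul ((-t)^m)
          refine this.congr_deriv ?_
          rw [pow_succ]; ring
      rw [iteratedDeriv_succ]
      have hev : iteratedDeriv m g =ᶠ[𝓝 s] fun u => ∫ t, (-t)^m * Real.exp (-(u*t)) ∂ν := by
        filter_upwards [Ioi_mem_nhds hs] with u hu
        exact ih u hu
      rw [hev.deriv_eq]
      exact key.deriv

end Renewal

lemma tsum_indicator_lt (m : ℕ) :
    ∑' k : ℕ, (if k < m then (1:ℝ≥0∞) else 0) = m := by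
  have h1 : ∑' k : ℕ, (if k < m then (1:ℝ≥0∞) else 0)
      = ∑ k ∈ Finset.range m, (if k < m then (1:ℝ≥0∞) else 0) :=
    tsum_eq_sum (fun k hk => by
      simp only [Finset.mem_range, not_lt] at hk
      simp [Nat.not_lt.mpr hk])
  rw [h1]
  have h2 : ∀ k ∈ Finset.range m, (if k < m then (1:ℝ≥0∞) else 0) = 1 := fun k hk => by
    simp [Finset.mem_range.mp hk]
  rw [Finset.sum_congr rfl h2]
  simp

lemma nat_lt_sInf {S : Set ℕ} (hne : S.Nonempty) (k : ℕ) : k < sInf S ↔ ∀ j ∈ S, k < j := by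
  constructor
  · intro h j hj; exact lt_of_lt_of_le h (Nat.sInf_le hj)
  · intro h; exact h _ (Nat.sInf_mem hne)

lemma count_iff {c : ℕ → ℝ} (hc : ∀ i, 0 < c i) {y : ℝ} (hy : 0 < y)
    (hex : ∃ k, 1 ≤ k ∧ y ≤ ∑ i ∈ Finset.range k, c i) (k : ℕ) :
    k < sInf {k | 1 ≤ k ∧ y ≤ ∑ i ∈ Finset.range k, c i}
      ↔ (∑ i ∈ Finset.range k, c i) < y := by
  set d : ℕ → ℝ := fun k => ∑ i ∈ Finset.range k, c i with hd
  have hmono : Monotone d := by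
    intro a b hab
    exact Finset.sum_le_sum_of_subset_of_nonneg (Finset.range_subset_range.mpr hab)
      (fun i _ _ => (hc i).le)
  have hne : {k | 1 ≤ k ∧ y ≤ d k}.Nonempty := hex
  rw [nat_lt_sInf hne]
  constructor
  · intro h
    by_contra hcon
    push_neg at hcon
    rcases Nat.eq_zero_or_pos k with rfl | hk
    · simp only [hd, Finset.range_zero, Finset.sum_empty] at hcon
      linarith
    · exact lt_irrefl k (h k ⟨hk, hcon⟩)
  · intro h j hj
    by_contra hcon
    push_neg at hcon
    exact absurd (le_trans hj.2 (hmono hcon)) (not_le.mpr h)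

section BC
variable {Ω : Type*} [MeasurableSpace Ω] {μ : Measure Ω} [IsProbabilityMeasure μ]

lemma ae_unbounded_sums {C : ℕ → Ω → ℝ} (hCmeas : ∀ i, Measurable (C i))
    (hCpos : ∀ i, ∀ᵐ ω ∂μ, 0 < C i ω)
    (hCiid : ∀ i j, IdentDistrib (C i) (C j) μ μ)
    (hCindep : iIndepFun C μ) :
    ∀ᵐ ω ∂μ, ∀ M : ℝ, ∃ k, M ≤ ∑ i ∈ Finset.range k, C i ω := by
  have hmeas0 : MeasurableSet {ω | 0 < C 0 ω} := measurableSet_lt measurable_const (hCmeas 0)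
  have h1 : μ {ω | 0 < C 0 ω} = 1 := by
    have hc : μ {ω | 0 < C 0 ω}ᶜ = 0 := by
      rw [Set.compl_setOf]
      exact ae_iff.mp (hCpos 0)
    have h := measure_add_measure_compl (μ := μ) hmeas0
    rw [hc, add_zero] at h
    simpa using h
  have hex : ∃ m : ℕ, 0 < μ {ω | 1/(m+1 : ℝ) < C 0 ω} := by
    by_contra hcon
    push_neg at hcon
    simp only [le_zero_iff] at hcon
    have hsub : {ω | 0 < C 0 ω} ⊆ ⋃ m : ℕ, {ω | 1/(m+1 : ℝ) < C 0 ω} := by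
      intro ω hω
      obtain ⟨m, hm⟩ := exists_nat_one_div_lt (show (0:ℝ) < C 0 ω from hω)
      exact mem_iUnion.mpr ⟨m, hm⟩
    have hle : μ {ω | 0 < C 0 ω} ≤ ∑' m : ℕ, μ {ω | 1/(m+1 : ℝ) < C 0 ω} :=
      le_trans (measure_mono hsub) (measure_iUnion_le _)
    rw [h1] at hle
    simp only [hcon, tsum_zero] at hle
    exact absurd hle (by simp)
  obtain ⟨m, hm⟩ := hex
  set ε : ℝ := 1/(m+1 : ℝ) with hε
  have hεpos : 0 < ε := by positivity
  set A : ℕ → Set Ω := fun i => C i ⁻¹' Ioi ε with hA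
  have hAmeas : ∀ i, MeasurableSet (A i) := fun i => (hCmeas i) measurableSet_Ioi
  have hAindep : iIndepSet A μ := by
    rw [iIndepSet_iff_meas_biInter hAmeas]
    intro S
    exact hCindep.measure_inter_preimage_eq_mul S (fun i _ => measurableSet_Ioi)
  have hAeq : ∀ i, μ (A i) = μ (A 0) := fun i =>
    (hCiid i 0).measure_mem_eq measurableSet_Ioi
  have hA0 : μ (A 0) ≠ 0 := by
    intro h
    exact absurd (show μ {ω | 1/(m+1:ℝ) < C 0 ω} = 0 from h) (ne_of_gt hm)
  have htop : ∑' i : ℕ, μ (A i) = ⊤ := by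
    rw [tsum_congr hAeq]
    exact ENNReal.tsum_const_eq_top_of_ne_zero hA0
  have hlimsup : μ (limsup A atTop) = 1 := measure_limsup_eq_one hAmeas hAindep htop
  have haelim : ∀ᵐ ω ∂μ, ω ∈ limsup A atTop := by
    have hmeas : MeasurableSet (limsup A atTop) := MeasurableSet.measurableSet_limsup hAmeas
    have hc : μ (limsup A atTop)ᶜ = 0 := by
      rw [measure_compl hmeas (measure_ne_top _ _), hlimsup, measure_univ]
      simp
    filter_upwards [measure_eq_zero_iff_ae_notMem.mp hc] with ω h
    simpa using h
  filter_upwards [haelim, ae_all_iff.mpr hCpos] with ω hlim hpos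
  have hfreq : ∃ᶠ i in atTop, ω ∈ A i := mem_limsup_iff_frequently_mem.mp hlim
  set d : ℕ → ℝ := fun k => ∑ i ∈ Finset.range k, C i ω with hd
  have hmono : Monotone d := fun a b hab =>
    Finset.sum_le_sum_of_subset_of_nonneg (Finset.range_subset_range.mpr hab)
      (fun i _ _ => (hpos i).le)
  have hstep : ∀ j : ℕ, ∃ k, (j : ℝ) * ε ≤ d k := by
    intro j
    induction j with
    | zero => exact ⟨0, by simp [hd]⟩
    | succ p ih =>
        obtain ⟨k, hk⟩ := ih
        obtain ⟨i, hiA, hik⟩ := (hfreq.and_eventually (eventually_ge_atTop k)).exists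
        refine ⟨i + 1, ?_⟩
        have h1 : d (i+1) = d i + C i ω := by
          simp [hd, Finset.sum_range_succ]
        have h2 : d k ≤ d i := hmono hik
        have h3 : ε < C i ω := hiA
        push_cast
        rw [h1]
        nlinarith
  intro M
  obtain ⟨j, hj⟩ := exists_nat_ge (M / ε)
  obtain ⟨k, hk⟩ := hstep j
  refine ⟨k, ?_⟩
  have : M ≤ (j:ℝ) * ε := by
    rw [div_le_iff₀ hεpos] at hj
    linarith
  linarith

end BC

/-- If `Y^s ~ Γ(n, μ)` (integer shape `n`, rate `μ`) and the i.i.d. gaps `C_i` have Laplace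
transform `L`, then `E[K^r] = ∑_{i=0}^{n-1} (μ^i / i!) (-1)^i (1/(1-L))^{(i)}(μ)`. -/
theorem stmt15 {Ω : Type*} [MeasurableSpace Ω] (μ : Measure Ω) [IsProbabilityMeasure μ]
    (C : ℕ → Ω → ℝ) (Ys : Ω → ℝ) (n : ℕ) (hn : 1 ≤ n) (μ0 : ℝ) (hμ0 : 0 < μ0)
    (hCmeas : ∀ i, Measurable (C i)) (hYsmeas : Measurable Ys)
    (hCpos : ∀ i, ∀ᵐ ω ∂μ, 0 < C i ω)
    (hCiid : ∀ i j, IdentDistrib (C i) (C j) μ μ)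
    (hCindep : iIndepFun C μ)
    (hindep : IndepFun (fun ω => fun i => C i ω) Ys μ)
    (hYs : μ.map Ys = gammaMeasure n μ0)
    (D : ℕ → Ω → ℝ) (hD : ∀ k ω, D k ω = ∑ i ∈ Finset.range k, C i ω)
    (Kr : Ω → ℕ) (hKr : ∀ ω, Kr ω = sInf {k | 1 ≤ k ∧ Ys ω ≤ D k ω})
    (L : ℝ → ℝ) (hL : ∀ s, L s = ∫ ω, Real.exp (-s * C 0 ω) ∂μ) :
    ∫⁻ ω, (Kr ω : ℝ≥0∞) ∂μ
      = ENNReal.ofReal (∑ i ∈ Finset.range n,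
          μ0 ^ i / (Nat.factorial i) * (-1 : ℝ) ^ i
            * iteratedDeriv i (fun s => (1 - L s)⁻¹) μ0) := by
  classical
  -- measurability of D
  have hDfun : ∀ k, D k = fun ω => ∑ i ∈ Finset.range k, C i ω := fun k => funext (hD k)
  have hDmeas : ∀ k, Measurable (D k) := by
    intro k
    rw [hDfun k]
    exact Finset.measurable_sum _ (fun i _ => hCmeas i)
  have haepos : ∀ᵐ ω ∂μ, ∀ i, 0 < C i ω := ae_all_iff.mpr hCpos
  -- Ys positive a.e.
  have hYpos : ∀ᵐ ω ∂μ, 0 < Ys ω := by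
    rw [ae_iff]
    have h1 : {ω | ¬ 0 < Ys ω} = Ys ⁻¹' (Iic 0) := by
      ext ω; simp [not_lt]
    rw [h1, ← Measure.map_apply hYsmeas measurableSet_Iic, hYs]
    have h2 : (Iic (0:ℝ)) ⊆ Iio 0 ∪ {0} := by
      intro x hx
      rcases lt_or_eq_of_le (mem_Iic.mp hx) with h | h
      · exact Or.inl h
      · exact Or.inr (by simp [h])
    refine le_antisymm (le_trans (measure_mono h2) ?_) (by simp)
    refine le_trans (measure_union_le _ _) ?_
    have h3 : gammaMeasure n μ0 (Iio 0) = 0 := by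
      rw [gammaMeasure, withDensity_apply _ measurableSet_Iio]
      exact lintegral_gammaPDF_of_nonpos le_rfl
    have h4 : gammaMeasure n μ0 {0} = 0 := by
      refine (withDensity_absolutelyContinuous volume (gammaPDF n μ0)) ?_
      simp
    rw [h3, h4]; simp
  -- unbounded sums
  have hub : ∀ᵐ ω ∂μ, ∀ M : ℝ, ∃ k, M ≤ ∑ i ∈ Finset.range k, C i ω :=
    ae_unbounded_sums hCmeas hCpos hCiid hCindep
  -- a.e. characterization of Kr
  have hgood : ∀ᵐ ω ∂μ, ∀ k, (k < Kr ω ↔ D k ω < Ys ω) := by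
    filter_upwards [haepos, hYpos, hub] with ω h1 h2 h3
    intro k
    have hex : ∃ k, 1 ≤ k ∧ Ys ω ≤ ∑ i ∈ Finset.range k, C i ω := by
      obtain ⟨k0, hk0⟩ := h3 (Ys ω)
      refine ⟨k0 + 1, Nat.succ_le_succ (Nat.zero_le _), le_trans hk0 ?_⟩
      exact Finset.sum_le_sum_of_subset_of_nonneg
        (Finset.range_subset_range.mpr (Nat.le_succ k0)) (fun i _ _ => (h1 i).le)
    have hiff := count_iff h1 h2 hex k
    rw [hKr ω]
    have hSet : {k | 1 ≤ k ∧ Ys ω ≤ D k ω}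
        = {k | 1 ≤ k ∧ Ys ω ≤ ∑ i ∈ Finset.range k, C i ω} := by
      ext j; simp [hD]
    rw [hSet, hD k ω]
    exact hiff
  -- LHS as a sum of probabilities
  have hTmeas : ∀ k, MeasurableSet {ω | D k ω < Ys ω} :=
    fun k => measurableSet_lt (hDmeas k) hYsmeas
  have hLHS : ∫⁻ ω, (Kr ω : ℝ≥0∞) ∂μ = ∑' k, μ {ω | D k ω < Ys ω} := by
    have h1 : ∫⁻ ω, (Kr ω : ℝ≥0∞) ∂μ
        = ∫⁻ ω, ∑' k, Set.indicator {ω | D k ω < Ys ω} (1 : Ω → ℝ≥0∞) ω ∂μ := by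
      apply lintegral_congr_ae
      filter_upwards [hgood] with ω hω
      have h2 : ∀ k, Set.indicator {ω | D k ω < Ys ω} (1 : Ω → ℝ≥0∞) ω
          = if k < Kr ω then (1:ℝ≥0∞) else 0 := by
        intro k
        by_cases h : D k ω < Ys ω
        · simp [Set.indicator_apply, h, (hω k).mpr h]
        · have h2 : ¬ k < Kr ω := fun hc => h ((hω k).mp hc)
          simp [Set.indicator_apply, h, h2]
      rw [tsum_congr h2, tsum_indicator_lt]
    rw [h1, lintegral_tsum (fun k => (measurable_one.indicator (hTmeas k)).aemeasurable)]
    exact tsum_congr (fun k => lintegral_indicator_one (hTmeas k))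
  -- independence of D k and Ys
  have hIndepDk : ∀ k, IndepFun (D k) Ys μ := by
    intro k
    have h : D k = (fun v : ℕ → ℝ => ∑ i ∈ Finset.range k, v i) ∘ (fun ω => fun i => C i ω) := by
      funext ω; simp [hD]
    have hφ : Measurable (fun v : ℕ → ℝ => ∑ i ∈ Finset.range k, v i) :=
      Finset.measurable_sum _ (fun i _ => measurable_pi_apply i)
    have := hindep.comp hφ measurable_id
    rw [h]
    exact this
  -- D k nonneg under map
  have hmapnn : ∀ k, ∀ᵐ x ∂(μ.map (D k)), 0 ≤ x := by
    intro k
    rw [ae_map_iff (hDmeas k).aemeasurable measurableSet_Ici]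
    filter_upwards [haepos] with ω h
    rw [hD]
    exact Finset.sum_nonneg (fun i _ => (h i).le)
  -- probability via gamma tail
  have hμT : ∀ k, μ {ω | D k ω < Ys ω}
      = ∫⁻ x, ENNReal.ofReal (Rfun μ0 n x) ∂(μ.map (D k)) := by
    intro k
    rw [prob_lt_eq μ (hDmeas k) hYsmeas (hIndepDk k), hYs]
    apply lintegral_congr_ae
    filter_upwards [hmapnn k] with x hx
    exact gamma_tail hn hμ0 hx
  -- the renewal measure
  set ν : Measure ℝ := Measure.sum (fun k => μ.map (D k)) with hν
  have hνnn : ∀ᵐ x ∂ν, 0 ≤ x := Measure.ae_sum_iff.mpr hmapnn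
  -- Laplace transform facts
  have hL0 : ∀ s : ℝ, 0 < s → 0 ≤ L s := fun s _ => (hL s) ▸ laplace_nonneg s
  have hL1 : ∀ s : ℝ, 0 < s → L s < 1 := fun s hs =>
    (hL s) ▸ laplace_lt_one (hCmeas 0) (hCpos 0) hs
  have hDknn : ∀ k, ∀ᵐ ω ∂μ, 0 ≤ D k ω := by
    intro k
    filter_upwards [haepos] with ω h
    rw [hD]
    exact Finset.sum_nonneg (fun i _ => (h i).le)
  have hintk : ∀ s : ℝ, 0 < s → ∀ k, Integrable (fun ω => Real.exp (-(s * D k ω))) μ := by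
    intro s hs k
    refine (integrable_const (1:ℝ)).mono'
      (((hDmeas k).const_mul s).neg.exp).aestronglyMeasurable ?_
    filter_upwards [hDknn k] with ω hω
    rw [Real.norm_eq_abs, abs_of_pos (Real.exp_pos _), Real.exp_le_one_iff]
    nlinarith
  have hlapk : ∀ s : ℝ, 0 < s → ∀ k,
      ∫ ω, Real.exp (-(s * D k ω)) ∂μ = (L s)^k := by
    intro s hs k
    rw [hL]
    have h := laplace_sum_pow hCmeas hCiid hCindep s k
    simp only [neg_mul] at h ⊢
    rw [← h]
    apply integral_congr_ae
    filter_upwards with ω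
    rw [hD]
  have hlintk : ∀ s : ℝ, 0 < s → ∀ k,
      ∫⁻ t, ENNReal.ofReal (Real.exp (-(s*t))) ∂(μ.map (D k))
        = ENNReal.ofReal ((L s)^k) := by
    intro s hs k
    rw [lintegral_map (by
      have : Measurable (fun t : ℝ => Real.exp (-(s*t))) := meas_exp_neg s
      exact this.ennreal_ofReal) (hDmeas k)]
    rw [← ofReal_integral_eq_lintegral_ofReal (hintk s hs k)
      (ae_of_all _ fun ω => (Real.exp_pos _).le)]
    rw [hlapk s hs k]
  have hfin : ∀ s : ℝ, 0 < s → (∫⁻ t, ENNReal.ofReal (Real.exp (-(s*t))) ∂ν) ≠ ⊤ := by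
    intro s hs
    rw [hν, lintegral_sum_measure, tsum_congr (hlintk s hs)]
    rw [← ENNReal.ofReal_tsum_of_nonneg (fun k => pow_nonneg (hL0 s hs) k)
      (summable_geometric_of_lt_one (hL0 s hs) (hL1 s hs))]
    exact ENNReal.ofReal_ne_top
  have hgint : ∀ s : ℝ, 0 < s → ∫ t, Real.exp (-(s*t)) ∂ν = (1 - L s)⁻¹ := by
    intro s hs
    have hInt : Integrable (fun t => Real.exp (-(s*t))) ν :=
      integrable_exp_renewal hνnn hfin hs
    rw [hν] at hInt ⊢
    rw [integral_sum_measure hInt]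
    have h2 : ∀ k, ∫ t, Real.exp (-(s*t)) ∂(μ.map (D k)) = (L s)^k := by
      intro k
      rw [integral_map (hDmeas k).aemeasurable (meas_exp_neg s).aestronglyMeasurable]
      exact hlapk s hs k
    rw [tsum_congr h2, tsum_geometric_of_lt_one (hL0 s hs) (hL1 s hs)]
  -- iterated derivatives
  have hder : ∀ i : ℕ, iteratedDeriv i (fun u => (1 - L u)⁻¹) μ0
      = ∫ t, (-t)^i * Real.exp (-(μ0*t)) ∂ν := by
    intro i
    exact iteratedDeriv_laplace_renewal hνnn hfin (fun u => (1 - L u)⁻¹)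
      (fun s hs => (hgint s hs).symm) i μ0 hμ0
  -- RHS sum equals integral of Rfun
  have hintpow : ∀ i : ℕ, Integrable (fun t => (μ0*t)^i * Real.exp (-(μ0*t)) / (Nat.factorial i)) ν := by
    intro i
    refine ((integrable_pow_exp_renewal hνnn hfin hμ0 i).const_mul
      (μ0^i / (Nat.factorial i))).congr (ae_of_all _ fun t => ?_)
    show μ0 ^ i / (Nat.factorial i) * (t ^ i * Real.exp (-(μ0 * t)))
        = (μ0 * t) ^ i * Real.exp (-(μ0 * t)) / (Nat.factorial i)
    rw [mul_pow]; ring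
  have hRHSsum : ∑ i ∈ Finset.range n, μ0 ^ i / (Nat.factorial i) * (-1:ℝ)^i
        * iteratedDeriv i (fun s => (1 - L s)⁻¹) μ0
      = ∫ t, Rfun μ0 n t ∂ν := by
    rw [Finset.sum_congr rfl (fun i _ => by rw [hder i])]
    have h1 : ∀ i ∈ Finset.range n, μ0 ^ i / (Nat.factorial i) * (-1:ℝ)^i
        * ∫ t, (-t)^i * Real.exp (-(μ0*t)) ∂ν
        = ∫ t, (μ0*t)^i * Real.exp (-(μ0*t)) / (Nat.factorial i) ∂ν := by
      intro i _
      rw [← integral_const_mul]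
      apply integral_congr_ae
      filter_upwards with t
      show μ0 ^ i / (Nat.factorial i) * (-1:ℝ)^i * ((-t) ^ i * Real.exp (-(μ0 * t)))
          = (μ0 * t) ^ i * Real.exp (-(μ0 * t)) / (Nat.factorial i)
      rw [mul_pow, neg_pow]
      ring_nf
      rw [mul_comm i 2, pow_mul]
      norm_num
    rw [Finset.sum_congr rfl h1, ← integral_finset_sum _ (fun i _ => hintpow i)]
    rfl
  -- Rfun integrable and nonneg
  have hRint : Integrable (Rfun μ0 n) ν := by
    have : Rfun μ0 n = fun t => ∑ i ∈ Finset.range n,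
        (μ0*t)^i * Real.exp (-(μ0*t)) / (Nat.factorial i) := by
      funext t; rfl
    rw [this]
    exact integrable_finset_sum _ (fun i _ => hintpow i)
  have hRnn : 0 ≤ᵐ[ν] Rfun μ0 n := by
    filter_upwards [hνnn] with t ht
    exact Rfun_nonneg n (by positivity)
  -- put everything together
  rw [hLHS, tsum_congr hμT, ← lintegral_sum_measure, ← hν,
    ← ofReal_integral_eq_lintegral_ofReal hRint hRnn, ← hRHSsum]
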